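/- arXiv:1405.6970 — 2 statements merged into one kernel-verified Lean document; each statement's English description precedes it below -/
import Mathlib

section
/- Let (G, Γ) be a matched pair and φ, ψ : Γ → G group homomorphisms satisfying, for all s, t ∈ Γ: (t⁻¹ ◁ φ(s⁻¹)) s t = s ◁ ψ(t). Then the map b : Γ × Γ → Γ × Γ, b(s, t) = ((t⁻¹ ◁ φ(s⁻¹))⁻¹, s ◁ ψ(t)), is a bijection. -/
/-- Abstract Lu–Yan–Zhu lemma: if `lA` is a left action of `Γ` on itself,
`rA` a right action, and `x * y = lA x y * rA x y` for all `x, y`, then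
the braiding map `(x, y) ↦ (lA x y, rA x y)` is bijective. -/
theorem lyz_braiding_bijective {Γ : Type*} [Group Γ] (lA rA : Γ → Γ → Γ)
    (lA_one : ∀ y, lA 1 y = y)
    (lA_mul : ∀ x z y, lA (x * z) y = lA x (lA z y))
    (rA_one : ∀ x, rA x 1 = x)
    (rA_mul : ∀ x y z, rA (rA x y) z = rA x (y * z))
    (compat : ∀ x y, x * y = lA x y * rA x y) :
    Function.Bijective (fun p : Γ × Γ => (lA p.1 p.2, rA p.1 p.2)) := by
  have key : ∀ x y : Γ, rA x⁻¹ (lA x y) = (rA x y)⁻¹ := by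
    intro x y
    have h1 := compat x⁻¹ (lA x y)
    have h2 : lA x⁻¹ (lA x y) = y := by
      rw [← lA_mul, inv_mul_cancel, lA_one]
    have h3 := compat x y
    rw [h2] at h1
    have h4 : rA x⁻¹ (lA x y) = y⁻¹ * (x⁻¹ * lA x y) := by
      rw [h1]; group
    rw [h4]
    have hlxy : lA x y = x * y * (rA x y)⁻¹ := by
      rw [h3]; group
    rw [hlxy]; group
  rw [Function.bijective_iff_has_inverse]
  refine ⟨fun p => ((rA p.2⁻¹ p.1⁻¹)⁻¹, lA (rA p.2⁻¹ p.1⁻¹) p.1), ?_, ?_⟩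
  · rintro ⟨s, t⟩
    simp only
    have hk : (rA s t)⁻¹ = rA s⁻¹ (lA s t) := (key s t).symm
    have h1 : rA (rA s t)⁻¹ (lA s t)⁻¹ = s⁻¹ := by
      rw [hk, rA_mul, mul_inv_cancel, rA_one]
    rw [h1]
    have h2 : lA s⁻¹ (lA s t) = t := by
      rw [← lA_mul, inv_mul_cancel, lA_one]
    rw [h2, inv_inv]
  · rintro ⟨p, q⟩
    simp only
    have hs : rA (rA q⁻¹ p⁻¹) p = q⁻¹ := by
      rw [rA_mul, inv_mul_cancel, rA_one]
    have h1 : lA (rA q⁻¹ p⁻¹)⁻¹ (lA (rA q⁻¹ p⁻¹) p) = p := by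
      rw [← lA_mul, inv_mul_cancel, lA_one]
    have h2 : rA (rA q⁻¹ p⁻¹)⁻¹ (lA (rA q⁻¹ p⁻¹) p) = q := by
      rw [key _ p, hs, inv_inv]
    rw [h1, h2]

/-- Let `(G, Γ)` be a matched pair and `φ, ψ : Γ → G` group homomorphisms satisfying
`(t⁻¹ ◁ φ(s⁻¹)) s t = s ◁ ψ(t)` for all `s, t ∈ Γ`.  Then the map
`b(s, t) = ((t⁻¹ ◁ φ(s⁻¹))⁻¹, s ◁ ψ(t))` is a bijection of `Γ × Γ`. -/
theorem matchedPair_braiding_map_bijective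
    {G Γ : Type*} [Group G] [Group Γ]
    (rhd : Γ → G → G) (lhd : Γ → G → Γ)
    (hA1 : ∀ s, lhd s 1 = s)
    (hA2 : ∀ s g h, lhd s (g * h) = lhd (lhd s g) h)
    (hA3 : ∀ g, rhd 1 g = g)
    (hA4 : ∀ s t g, rhd (s * t) g = rhd s (rhd t g))
    (hM1 : ∀ s g h, rhd s (g * h) = rhd s g * rhd (lhd s g) h)
    (hM2 : ∀ s t g, lhd (s * t) g = lhd s (rhd t g) * lhd t g)
    (hB2 : ∀ g, Function.Bijective (fun s => lhd s g))
    (φ ψ : Γ →* G)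
    (hcomp : ∀ s t : Γ, lhd t⁻¹ (φ s⁻¹) * s * t = lhd s (ψ t)) :
    Function.Bijective
      (fun p : Γ × Γ => ((lhd p.2⁻¹ (φ p.1⁻¹))⁻¹, lhd p.1 (ψ p.2))) := by
  refine lyz_braiding_bijective (fun x y => (lhd y⁻¹ (φ x⁻¹))⁻¹)
    (fun x y => lhd x (ψ y)) ?_ ?_ ?_ ?_ ?_
  · intro y
    simp only [inv_one, map_one, hA1, inv_inv]
  · intro x z y
    simp only [mul_inv_rev, map_mul, hA2, inv_inv]
  · intro x
    simp only [map_one, hA1]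
  · intro x y z
    simp only [map_mul, hA2]
  · intro x y
    have h := hcomp x y
    show x * y = (lhd y⁻¹ (φ x⁻¹))⁻¹ * lhd x (ψ y)
    rw [← h]; group
end

section
/- Let (G, Γ) be a matched pair and φ, ψ : Γ → G group homomorphisms satisfying the Lu–Yan–Zhu conditions: st = (^{ψ(s)}t)(s^{φ(t)}), ψ(s)^{t} = ψ(s^{φ(t)}), ˢφ(t) = φ(^{ψ(s)}t) for all s, t ∈ Γ (where ˢg = s ▷ g, sᵍ = s ◁ g, ᵍs = (s⁻¹ ◁ g⁻¹)⁻¹, gˢ = (s⁻¹ ▷ g⁻¹)⁻¹). Then the map R⁻¹ : Γ × Γ → Γ × Γ given by R⁻¹(t, s) = (^{φ(s)}t, s^{ψ(t)}) has the property that R is a set-theoretical solution of the quantum Yang–Baxter equation: R¹²R¹³R²³ = R²³R¹³R¹² as maps Γ³ → Γ³. -/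
/-- `R` applied to the first two factors of a triple. -/
def qybeR12 {X : Type*} (R : X × X → X × X) : X × X × X → X × X × X :=
  fun p => ((R (p.1, p.2.1)).1, (R (p.1, p.2.1)).2, p.2.2)

/-- `R` applied to the first and third factors of a triple. -/
def qybeR13 {X : Type*} (R : X × X → X × X) : X × X × X → X × X × X :=
  fun p => ((R (p.1, p.2.2)).1, p.2.1, (R (p.1, p.2.2)).2)

/-- `R` applied to the last two factors of a triple. -/
def qybeR23 {X : Type*} (R : X × X → X × X) : X × X × X → X × X × X :=
  fun p => (p.1, (R (p.2.1, p.2.2)).1, (R (p.2.1, p.2.2)).2)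

/-- Let `(G, Γ)` be a matched pair and `φ, ψ : Γ → G` group homomorphisms satisfying the
Lu–Yan–Zhu conditions `st = (^{ψ(s)}t)(s^{φ(t)})`, `ψ(s)ᵗ = ψ(s^{φ(t)})`,
`ˢφ(t) = φ(^{ψ(s)}t)` (where `ˢg = s ▷ g`, `sᵍ = s ◁ g`, `ᵍs = (s⁻¹ ◁ g⁻¹)⁻¹`,
`gˢ = (s⁻¹ ▷ g⁻¹)⁻¹`).  Then the bijection `R` of `Γ × Γ` whose inverse is
`R⁻¹(t, s) = (^{φ(s)}t, s^{ψ(t)})` is a set-theoretical solution of the quantum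
Yang–Baxter equation `R¹² R¹³ R²³ = R²³ R¹³ R¹²`. -/
theorem matchedPair_lyz_solution_qybe
    {G Γ : Type*} [Group G] [Group Γ]
    (rhd : Γ → G → G) (lhd : Γ → G → Γ)
    (hA1 : ∀ s, lhd s 1 = s)
    (hA2 : ∀ s g h, lhd s (g * h) = lhd (lhd s g) h)
    (hA3 : ∀ g, rhd 1 g = g)
    (hA4 : ∀ s t g, rhd (s * t) g = rhd s (rhd t g))
    (hM1 : ∀ s g h, rhd s (g * h) = rhd s g * rhd (lhd s g) h)
    (hM2 : ∀ s t g, lhd (s * t) g = lhd s (rhd t g) * lhd t g)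
    (φ ψ : Γ →* G)
    (h1 : ∀ s t : Γ, s * t = (lhd t⁻¹ (ψ s)⁻¹)⁻¹ * lhd s (φ t))
    (h2 : ∀ s t : Γ, (rhd t⁻¹ (ψ s)⁻¹)⁻¹ = ψ (lhd s (φ t)))
    (h3 : ∀ s t : Γ, rhd s (φ t) = φ ((lhd t⁻¹ (ψ s)⁻¹)⁻¹))
    (R : Γ × Γ ≃ Γ × Γ)
    (hR : ∀ t s : Γ, R.symm (t, s) = ((lhd t⁻¹ (φ s)⁻¹)⁻¹, lhd s (ψ t))) :
    qybeR12 (⇑R) ∘ qybeR13 (⇑R) ∘ qybeR23 (⇑R) =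
      qybeR23 (⇑R) ∘ qybeR13 (⇑R) ∘ qybeR12 (⇑R) := by
  -- abstract the two components of `R.symm`
  obtain ⟨f, hf⟩ : ∃ f : Γ → Γ → Γ, ∀ t s, f t s = (lhd t⁻¹ (φ s)⁻¹)⁻¹ :=
    ⟨fun t s => (lhd t⁻¹ (φ s)⁻¹)⁻¹, fun _ _ => rfl⟩
  obtain ⟨g, hg⟩ : ∃ g : Γ → Γ → Γ, ∀ t s, g t s = lhd s (ψ t) :=
    ⟨fun t s => lhd s (ψ t), fun _ _ => rfl⟩
  have hS : ∀ t s : Γ, R.symm (t, s) = (f t s, g t s) := by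
    intro t s; rw [hR, hf, hg]
  -- K1 : f s t * g s t = t * s
  have K1f : ∀ s t : Γ, f s t * g s t = t * s := by
    intro s t
    have h := h1 s⁻¹ t⁻¹
    simp only [map_inv, inv_inv] at h
    have h' := congrArg Inv.inv h
    simp only [mul_inv_rev, inv_inv] at h'
    rw [hf, hg]
    exact h'.symm
  -- K2 : rhd y (ψ x) = ψ (f x y)
  have K2f : ∀ y x : Γ, rhd y (ψ x) = ψ (f x y) := by
    intro y x
    have h := h2 x⁻¹ y⁻¹
    simp only [map_inv, inv_inv] at h
    rw [hf, map_inv, ← h, inv_inv]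
  -- composition rule for f in its second argument
  have Hcomp : ∀ a b c : Γ, f (f a b) c = (lhd a⁻¹ (φ c * φ b)⁻¹)⁻¹ := by
    intro a b c
    rw [hf (f a b) c, hf a b, inv_inv, ← hA2, ← mul_inv_rev]
  have Eq1 : ∀ x y z : Γ, f (f x (g y z)) (f y z) = f (f x y) z := by
    intro x y z
    rw [Hcomp, Hcomp, ← map_mul, ← map_mul, K1f]
  have Eq3 : ∀ x y z : Γ, g x (g y z) = g (g x y) (g (f x y) z) := by
    intro x y z
    rw [hg x, hg y z, ← hA2, ← map_mul,
        hg (g x y), hg (f x y) z, ← hA2, ← map_mul, K1f]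
  have Eq2 : ∀ x y z : Γ, g (f x (g y z)) (f y z) = f (g x y) (g (f x y) z) := by
    intro x y z
    have fexpr : ∀ s t : Γ, f s t = t * s * (g s t)⁻¹ := by
      intro s t
      rw [← K1f s t, mul_inv_cancel_right]
    have hL : g (f x (g y z)) (f y z) = lhd (z * y) (ψ x) * (lhd z (ψ (y * x)))⁻¹ := by
      rw [hg, ← K2f (g y z) x]
      have hm := hM2 (f y z) (g y z) (ψ x)
      rw [K1f] at hm
      have hB : lhd (g y z) (ψ x) = lhd z (ψ (y * x)) := by
        rw [hg y z, ← hA2, ← map_mul]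
      rw [hB] at hm
      rw [eq_mul_inv_iff_mul_eq]
      exact hm.symm
    have hRv : f (g x y) (g (f x y) z) = lhd (z * y) (ψ x) * (lhd z (ψ (y * x)))⁻¹ := by
      rw [fexpr]
      have e1 : g (f x y) z * g x y = lhd (z * y) (ψ x) := by
        rw [hg (f x y) z, hg x y, ← K2f y x, hM2]
      have e2 : g (g x y) (g (f x y) z) = lhd z (ψ (y * x)) := by
        rw [← Eq3, hg x, hg y z, ← hA2, ← map_mul]
      rw [e1, e2]
    rw [hL, hRv]
  -- QYBE for S = R.symm
  have keyp : ∀ p : Γ × Γ × Γ,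
      qybeR12 (⇑R.symm) (qybeR13 (⇑R.symm) (qybeR23 (⇑R.symm) p)) =
      qybeR23 (⇑R.symm) (qybeR13 (⇑R.symm) (qybeR12 (⇑R.symm) p)) := by
    rintro ⟨x, y, z⟩
    simp only [qybeR12, qybeR13, qybeR23, hS, Prod.mk.injEq]
    exact ⟨Eq1 x y z, Eq2 x y z, Eq3 x y z⟩
  -- cancellation lemmas
  have c12 : ∀ (e : Γ × Γ ≃ Γ × Γ) (p : Γ × Γ × Γ),
      qybeR12 (⇑e.symm) (qybeR12 (⇑e) p) = p := by
    intro e p; simp [qybeR12]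
  have c13 : ∀ (e : Γ × Γ ≃ Γ × Γ) (p : Γ × Γ × Γ),
      qybeR13 (⇑e.symm) (qybeR13 (⇑e) p) = p := by
    intro e p; simp [qybeR13]
  have c23 : ∀ (e : Γ × Γ ≃ Γ × Γ) (p : Γ × Γ × Γ),
      qybeR23 (⇑e.symm) (qybeR23 (⇑e) p) = p := by
    intro e p; simp [qybeR23]
  have c12r : ∀ p : Γ × Γ × Γ, qybeR12 (⇑R) (qybeR12 (⇑R.symm) p) = p := by
    intro p; have := c12 R.symm p; rwa [Equiv.symm_symm] at this
  have c13r : ∀ p : Γ × Γ × Γ, qybeR13 (⇑R) (qybeR13 (⇑R.symm) p) = p := by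
    intro p; have := c13 R.symm p; rwa [Equiv.symm_symm] at this
  have c23r : ∀ p : Γ × Γ × Γ, qybeR23 (⇑R) (qybeR23 (⇑R.symm) p) = p := by
    intro p; have := c23 R.symm p; rwa [Equiv.symm_symm] at this
  funext p
  simp only [Function.comp_apply]
  have hp : qybeR12 (⇑R.symm) (qybeR13 (⇑R.symm) (qybeR23 (⇑R.symm)
      (qybeR12 (⇑R) (qybeR13 (⇑R) (qybeR23 (⇑R) p))))) = p := by
    rw [keyp, c12 R, c13 R, c23 R]
  conv_rhs => rw [← hp]
  rw [c12r, c13r, c23r]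
end
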